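/- Let m ≥ 1, R > 1, and let 𝒜 = (A_n)_{n∈ℤ} be a sequence of linear isomorphisms of ℝ^m with ‖A_n‖ < R and ‖A_n⁻¹‖ < R for all n. Then for every γ ∈ (0,1), 𝒜 has property SG(γ) if and only if 𝒜 has property SG(0) (the bounded solution property). In particular the sublinear growth property and the bounded solution property are equivalent. -/

import Mathlib

set_option maxHeartbeats 1000000

noncomputable section

abbrev Euc (m : ℕ) := EuclideanSpace ℝ (Fin m)

/-- The cocycle `A_{k+l-1} ∘ ⋯ ∘ A_k`. -/
def Phi (m : ℕ) (A : ℤ → Euc m ≃L[ℝ] Euc m) (k : ℤ) : ℕ → Euc m → Euc m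
  | 0 => fun v => v
  | l + 1 => fun v => A (k + l) (Phi m A k l v)

/-- Slow growth property with exponent γ. -/
def SG (m : ℕ) (A : ℤ → Euc m ≃L[ℝ] Euc m) (γ : ℝ) : Prop :=
  ∃ L : ℝ, 0 < L ∧ ∀ (i : ℤ) (N : ℕ), 1 ≤ N →
    ∀ w : ℤ → Euc m, (∀ k : ℤ, i + 1 ≤ k → k ≤ i + N → ‖w k‖ ≤ 1) →
    ∃ v : ℤ → Euc m,
      (∀ k : ℤ, i ≤ k → k ≤ i + N - 1 → v (k + 1) = A k (v k) + w (k + 1)) ∧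
      (∀ k : ℤ, i ≤ k → k ≤ i + N → ‖v k‖ ≤ L * (N : ℝ) ^ γ)

/-- Exponential dichotomy on ℤ⁺ with witnessing subspaces Es, Eu. -/
def ExpDichPos (m : ℕ) (A : ℤ → Euc m ≃L[ℝ] Euc m)
    (Es Eu : ℤ → Submodule ℝ (Euc m)) : Prop :=
  ∃ C : ℝ, 0 < C ∧ ∃ lam : ℝ, lam ∈ Set.Ioo (0 : ℝ) 1 ∧
    (∀ k : ℤ, 0 ≤ k → IsCompl (Es k) (Eu k)) ∧
    (∀ k : ℤ, 0 ≤ k → (Es k).map ((A k : Euc m →L[ℝ] Euc m) : Euc m →ₗ[ℝ] Euc m) = Es (k + 1)) ∧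
    (∀ k : ℤ, 0 ≤ k → (Eu k).map ((A k : Euc m →L[ℝ] Euc m) : Euc m →ₗ[ℝ] Euc m) = Eu (k + 1)) ∧
    (∀ k : ℤ, 0 ≤ k → ∀ l : ℕ, 0 < l → ∀ v ∈ Es k,
      ‖Phi m A k l v‖ ≤ C * lam ^ l * ‖v‖) ∧
    (∀ k : ℤ, 0 ≤ k → ∀ l : ℕ, 0 < l → ∀ v ∈ Eu k,
      C⁻¹ * lam ^ (-(l : ℤ)) * ‖v‖ ≤ ‖Phi m A k l v‖)

/-- Exponential dichotomy on ℤ⁻ with witnessing subspaces Es, Eu. -/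
def ExpDichNeg (m : ℕ) (A : ℤ → Euc m ≃L[ℝ] Euc m)
    (Es Eu : ℤ → Submodule ℝ (Euc m)) : Prop :=
  ∃ C : ℝ, 0 < C ∧ ∃ lam : ℝ, lam ∈ Set.Ioo (0 : ℝ) 1 ∧
    (∀ k : ℤ, k ≤ 0 → IsCompl (Es k) (Eu k)) ∧
    (∀ k : ℤ, k < 0 → (Es k).map ((A k : Euc m →L[ℝ] Euc m) : Euc m →ₗ[ℝ] Euc m) = Es (k + 1)) ∧
    (∀ k : ℤ, k < 0 → (Eu k).map ((A k : Euc m →L[ℝ] Euc m) : Euc m →ₗ[ℝ] Euc m) = Eu (k + 1)) ∧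
    (∀ (k : ℤ) (l : ℕ), 0 < l → k + l ≤ 0 → ∀ v ∈ Es k,
      ‖Phi m A k l v‖ ≤ C * lam ^ l * ‖v‖) ∧
    (∀ (k : ℤ) (l : ℕ), 0 < l → k + l ≤ 0 → ∀ v ∈ Eu k,
      C⁻¹ * lam ^ (-(l : ℤ)) * ‖v‖ ≤ ‖Phi m A k l v‖)


lemma tent_pair_real (n e : ℝ) (hn : 0 < n) (h0 : 0 ≤ e) (h1 : e ≤ n) :
    max 0 (1 - |e| / n) + max 0 (1 - |e - n| / n) = 1 := by
  rw [abs_of_nonneg h0, abs_of_nonpos (by linarith)]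
  rw [max_eq_right (by rw [sub_nonneg]; exact div_le_one_of_le₀ h1 hn.le)]
  rw [show (1 : ℝ) - -(e - n) / n = e / n by field_simp; ring]
  rw [max_eq_right (by positivity)]
  field_simp
  ring

lemma tent_lip (a b : ℝ) : |max 0 a - max 0 b| ≤ |a - b| := by
  rw [max_comm 0 a, max_comm 0 b]
  exact abs_max_sub_max_le_abs a b 0

lemma approx_lemma (m : ℕ) (A : ℤ → Euc m ≃L[ℝ] Euc m) (R : ℝ) (hR : 1 < R)
    (hA : ∀ nn : ℤ, ‖(A nn : Euc m →L[ℝ] Euc m)‖ < R)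
    (L γ : ℝ) (hL : 0 < L)
    (hSG : ∀ (i : ℤ) (N : ℕ), 1 ≤ N →
      ∀ w : ℤ → Euc m, (∀ k : ℤ, i + 1 ≤ k → k ≤ i + N → ‖w k‖ ≤ 1) →
      ∃ v : ℤ → Euc m,
        (∀ k : ℤ, i ≤ k → k ≤ i + N - 1 → v (k + 1) = A k (v k) + w (k + 1)) ∧
        (∀ k : ℤ, i ≤ k → k ≤ i + N → ‖v k‖ ≤ L * (N : ℝ) ^ γ))
    (n : ℕ) (hn : 1 ≤ n)
    (hsmall : 2 * (R * (L * ((2 * n : ℕ) : ℝ) ^ γ)) / n ≤ 1 / 2)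
    (i : ℤ) (N : ℕ) (w : ℤ → Euc m) (hw : ∀ k, ‖w k‖ ≤ 1) :
    ∃ V : ℤ → Euc m,
      (∀ k : ℤ, i ≤ k → k ≤ i + N → ‖V k‖ ≤ L * ((2 * n : ℕ) : ℝ) ^ γ) ∧
      (∀ k : ℤ, i ≤ k → k ≤ i + N - 1 →
        ‖V (k + 1) - A k (V k) - w (k + 1)‖ ≤ 1 / 2) := by
  have hn0 : (0 : ℝ) < n := by exact_mod_cast hn
  have hnZ : (0 : ℤ) < n := by exact_mod_cast hn
  set M : ℝ := L * ((2 * n : ℕ) : ℝ) ^ γ with hM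
  have hM0 : 0 < M := by
    apply mul_pos hL
    apply Real.rpow_pos_of_pos
    have : (0:ℕ) < 2 * n := by omega
    exact_mod_cast this
  -- tents
  set χ : ℕ → ℤ → ℝ := fun j k => max 0 (1 - |((k - (i + (j : ℤ) * n) : ℤ) : ℝ)| / n) with hχ
  have hχnonneg : ∀ j k, 0 ≤ χ j k := fun j k => le_max_left _ _
  -- support of tents
  have hχsupp : ∀ j k, χ j k ≠ 0 → |k - (i + (j : ℤ) * n)| < n := by
    intro j k h
    by_contra hcon
    push_neg at hcon
    apply h
    rw [hχ]
    simp only []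
    rw [max_eq_left]
    rw [sub_nonpos]
    rw [le_div_iff₀ hn0]
    rw [one_mul]
    have : ((n : ℤ) : ℝ) ≤ ((|k - (i + (j : ℤ) * n)| : ℤ) : ℝ) := by exact_mod_cast hcon
    rw [Int.cast_abs] at this
    exact_mod_cast this
  -- solutions on windows of length 2n
  have hv := fun j : ℕ => hSG (i + (j : ℤ) * n - n) (2 * n) (by omega) w
    (fun k _ _ => hw k)
  choose v hrec hbd using hv
  -- the index set
  set S : Finset ℕ := Finset.range (N / n + 2) with hS
  set V : ℤ → Euc m := fun k => ∑ j ∈ S, χ j k • v j k with hV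
  -- master decomposition for points in the window
  have hmaster : ∀ k : ℤ, i ≤ k → ∃ a : ℕ,
      ((a : ℤ) * n ≤ k - i ∧ k - i < (a : ℤ) * n + n) ∧
      (∀ j : ℕ, j ≠ a → j ≠ a + 1 → χ j k = 0 ∧ χ j (k + 1) = 0) := by
    intro k hk
    have hd : 0 ≤ k - i := by omega
    set q : ℤ := (k - i) / n with hq
    have hq0 : 0 ≤ q := Int.ediv_nonneg hd hnZ.le
    set r : ℤ := (k - i) % n with hr
    have hr0 : 0 ≤ r := Int.emod_nonneg _ (by omega)
    have hrn : r < n := Int.emod_lt_of_pos _ hnZ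
    have hqr : (n : ℤ) * q + r = k - i := Int.mul_ediv_add_emod _ _
    refine ⟨q.toNat, ?_, ?_⟩
    · rw [Int.toNat_of_nonneg hq0]
      constructor <;> nlinarith
    · intro j hj1 hj2
      have hjlt : (j : ℤ) < q ∨ q + 1 < (j : ℤ) := by omega
      have key2 : ∀ s : ℤ, 0 ≤ s → s ≤ 1 → (n : ℤ) ≤ |k + s - (i + (j : ℤ) * n)| := by
        intro s hs0 hs1
        rcases hjlt with h | h
        · have h1 : (n : ℤ) * 1 ≤ n * (q - (j : ℤ)) :=
            mul_le_mul_of_nonneg_left (by omega) hnZ.le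
          have hx : (n : ℤ) * (q - (j : ℤ)) = n * q - n * (j : ℤ) := by ring
          rw [abs_of_nonneg (by nlinarith)]
          nlinarith
        · have h1 : (n : ℤ) * 2 ≤ n * ((j : ℤ) - q) :=
            mul_le_mul_of_nonneg_left (by omega) hnZ.le
          have hx : (n : ℤ) * ((j : ℤ) - q) = n * (j : ℤ) - n * q := by ring
          rw [abs_of_nonpos (by nlinarith)]
          nlinarith
      have key : ∀ kk : ℤ, (n : ℤ) ≤ |kk - (i + (j : ℤ) * n)| → χ j kk = 0 := by
        intro kk hkk
        rw [hχ]
        simp only []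
        rw [max_eq_left]
        rw [sub_nonpos, le_div_iff₀ hn0, one_mul]
        have : ((n : ℤ) : ℝ) ≤ ((|kk - (i + (j : ℤ) * n)| : ℤ) : ℝ) := by exact_mod_cast hkk
        rw [Int.cast_abs] at this
        exact_mod_cast this
      constructor
      · apply key
        have := key2 0 le_rfl zero_le_one
        simpa using this
      · exact key _ (key2 1 (by omega) le_rfl)
  -- the pair χ a + χ (a+1) at a point
  have hpairval : ∀ (a : ℕ) (kk : ℤ), 0 ≤ kk - (i + (a : ℤ) * n) →
      kk - (i + (a : ℤ) * n) ≤ n → χ a kk + χ (a + 1) kk = 1 := by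
    intro a kk h0 h1
    have e0 : ((kk - (i + (a : ℤ) * n) : ℤ) : ℝ) = ((kk : ℝ) - (i + (a : ℝ) * n)) := by
      push_cast; ring
    have := tent_pair_real n ((kk : ℝ) - ((i : ℝ) + (a : ℝ) * n)) hn0
      (by rw [← e0]; exact_mod_cast h0) (by
        have : ((kk - (i + (a : ℤ) * n) : ℤ) : ℝ) ≤ ((n : ℤ) : ℝ) := by exact_mod_cast h1
        rw [e0] at this; push_cast at this ⊢; linarith)
    rw [hχ]
    simp only []
    convert this using 4
    · push_cast; ring
    · push_cast; ring
  -- partition of unity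
  have hmemS : ∀ a : ℕ, (a : ℤ) * n ≤ (N : ℤ) → a ∈ S ∧ a + 1 ∈ S := by
    intro a h
    have h' : a * n ≤ N := by exact_mod_cast h
    have : a ≤ N / n := (Nat.le_div_iff_mul_le (by omega)).mpr h'
    constructor <;> · rw [hS]; exact Finset.mem_range.mpr (by omega)
  have hpart : ∀ k : ℤ, i ≤ k → k ≤ i + N → ∑ j ∈ S, χ j k = 1 := by
    intro k hk1 hk2
    obtain ⟨a, ⟨ha1, ha2⟩, hz⟩ := hmaster k hk1
    have hmem := hmemS a (by omega)
    have hsub : ({a, a + 1} : Finset ℕ) ⊆ S := by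
      intro x hx
      simp only [Finset.mem_insert, Finset.mem_singleton] at hx
      rcases hx with rfl | rfl
      · exact hmem.1
      · exact hmem.2
    rw [← Finset.sum_subset hsub (fun x hx hnx => by
      simp only [Finset.mem_insert, Finset.mem_singleton] at hnx
      push_neg at hnx
      exact (hz x hnx.1 hnx.2).1)]
    rw [Finset.sum_pair (by omega)]
    exact hpairval a k (by omega) (by omega)
  -- bound on V
  have hVbd : ∀ k : ℤ, i ≤ k → k ≤ i + N → ‖V k‖ ≤ M := by
    intro k hk1 hk2
    calc ‖∑ j ∈ S, χ j k • v j k‖ ≤ ∑ j ∈ S, ‖χ j k • v j k‖ := norm_sum_le _ _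
      _ ≤ ∑ j ∈ S, χ j k * M := by
          apply Finset.sum_le_sum
          intro j hj
          rw [norm_smul, Real.norm_eq_abs, abs_of_nonneg (hχnonneg j k)]
          by_cases h : χ j k = 0
          · simp [h]
          · have hsup := hχsupp j k h
            rw [abs_lt] at hsup
            exact mul_le_mul_of_nonneg_left
              (hbd j k (by omega) (by push_cast; omega)) (hχnonneg j k)
      _ = 1 * M := by rw [← Finset.sum_mul, hpart k hk1 hk2]
      _ = M := one_mul M
  -- the defect identity
  have hdef : ∀ k : ℤ, i ≤ k → k ≤ i + N - 1 →
      V (k + 1) - A k (V k) - w (k + 1)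
        = ∑ j ∈ S, (χ j (k + 1) - χ j k) • (A k (v j k)) := by
    intro k hk1 hk2
    have hA1 : A k (V k) = ∑ j ∈ S, χ j k • (A k (v j k)) := by
      rw [hV]
      simp only [map_sum, map_smul]
    have hw1 : w (k + 1) = ∑ j ∈ S, χ j (k + 1) • w (k + 1) := by
      rw [← Finset.sum_smul, hpart (k + 1) (by omega) (by omega), one_smul]
    rw [hA1]
    nth_rewrite 1 [hw1]
    rw [hV]
    simp only []
    rw [← Finset.sum_sub_distrib, ← Finset.sum_sub_distrib]
    apply Finset.sum_congr rfl
    intro j hj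
    by_cases h : χ j (k + 1) = 0
    · simp [h, sub_smul]
    · have hsup := hχsupp j (k + 1) h
      rw [abs_lt] at hsup
      rw [hrec j k (by omega) (by push_cast; omega)]
      rw [smul_add, sub_smul]
      abel
  -- defect bound
  have hdefbd : ∀ k : ℤ, i ≤ k → k ≤ i + N - 1 →
      ‖∑ j ∈ S, (χ j (k + 1) - χ j k) • (A k (v j k))‖ ≤ 1 / 2 := by
    intro k hk1 hk2
    obtain ⟨a, ⟨ha1, ha2⟩, hz⟩ := hmaster k hk1
    have hAk : ‖(A k : Euc m →L[ℝ] Euc m)‖ ≤ R := (hA k).le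
    have hR0 : (0 : ℝ) ≤ R := le_trans zero_le_one hR.le
    have hsub : S ∩ {a, a + 1} ⊆ S := Finset.inter_subset_left
    have hzero : ∀ x ∈ S, x ∉ S ∩ ({a, a + 1} : Finset ℕ) →
        (χ x (k + 1) - χ x k) • (A k (v x k)) = 0 := by
      intro x hx hnx
      have hxx : x ∉ ({a, a + 1} : Finset ℕ) := fun hmem => hnx (Finset.mem_inter.mpr ⟨hx, hmem⟩)
      simp only [Finset.mem_insert, Finset.mem_singleton] at hxx
      push_neg at hxx
      obtain ⟨hz1, hz2⟩ := hz x hxx.1 hxx.2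
      rw [hz1, hz2]
      simp
    rw [← Finset.sum_subset hsub hzero]
    have hterm : ∀ j ∈ S ∩ ({a, a + 1} : Finset ℕ),
        ‖(χ j (k + 1) - χ j k) • (A k (v j k))‖ ≤ (1 / n) * (R * M) := by
      intro j hj
      rw [norm_smul, Real.norm_eq_abs]
      by_cases hΔ : χ j (k + 1) - χ j k = 0
      · rw [hΔ]
        simp only [abs_zero, zero_mul]
        positivity
      · have hin : i + (j : ℤ) * n - n ≤ k ∧ k ≤ i + (j : ℤ) * n - n + ((2 * n : ℕ) : ℤ) := by
          by_cases h0 : χ j k = 0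
          · have h1 : χ j (k + 1) ≠ 0 := fun hc => hΔ (by rw [hc, h0]; ring)
            have := hχsupp j (k + 1) h1
            rw [abs_lt] at this
            constructor <;> [push_cast; push_cast] <;> omega
          · have := hχsupp j k h0
            rw [abs_lt] at this
            constructor <;> [push_cast; push_cast] <;> omega
        have hvbd : ‖v j k‖ ≤ M := hbd j k hin.1 hin.2
        have hAv : ‖A k (v j k)‖ ≤ R * M := by
          calc ‖A k (v j k)‖ = ‖(A k : Euc m →L[ℝ] Euc m) (v j k)‖ := rfl
            _ ≤ ‖(A k : Euc m →L[ℝ] Euc m)‖ * ‖v j k‖ := (A k : Euc m →L[ℝ] Euc m).le_opNorm _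
            _ ≤ R * M := mul_le_mul hAk hvbd (norm_nonneg _) hR0
        have hΔbd : |χ j (k + 1) - χ j k| ≤ 1 / n := by
          refine le_trans (tent_lip _ _) ?_
          rw [show (1 - |((k + 1 - (i + (j : ℤ) * n) : ℤ) : ℝ)| / n)
              - (1 - |((k - (i + (j : ℤ) * n) : ℤ) : ℝ)| / n)
              = (|((k - (i + (j : ℤ) * n) : ℤ) : ℝ)| - |((k + 1 - (i + (j : ℤ) * n) : ℤ) : ℝ)|) / n
            by ring]
          rw [abs_div, abs_of_pos hn0]
          rw [div_le_div_iff_of_pos_right hn0]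
          refine le_trans (abs_abs_sub_abs_le_abs_sub _ _) ?_
          have hone : ((k - (i + (j : ℤ) * n) : ℤ) : ℝ)
              - ((k + 1 - (i + (j : ℤ) * n) : ℤ) : ℝ) = -1 := by push_cast; ring
          rw [hone]
          simp
        exact mul_le_mul hΔbd hAv (norm_nonneg _) (by positivity)
    calc ‖∑ j ∈ S ∩ ({a, a + 1} : Finset ℕ), (χ j (k + 1) - χ j k) • (A k (v j k))‖
        ≤ ∑ j ∈ S ∩ ({a, a + 1} : Finset ℕ), ‖(χ j (k + 1) - χ j k) • (A k (v j k))‖ :=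
          norm_sum_le _ _
      _ ≤ ∑ _j ∈ S ∩ ({a, a + 1} : Finset ℕ), (1 / n) * (R * M) := Finset.sum_le_sum hterm
      _ = (S ∩ ({a, a + 1} : Finset ℕ)).card • ((1 / n) * (R * M)) := Finset.sum_const _
      _ ≤ 2 * ((1 / n) * (R * M)) := by
          rw [nsmul_eq_mul]
          have hcard : (S ∩ ({a, a + 1} : Finset ℕ)).card ≤ 2 := by
            refine le_trans (Finset.card_le_card Finset.inter_subset_right) ?_
            refine le_trans (Finset.card_insert_le _ _) ?_
            simp
          have : ((S ∩ ({a, a + 1} : Finset ℕ)).card : ℝ) ≤ 2 := by exact_mod_cast hcard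
          exact mul_le_mul_of_nonneg_right this (by positivity)
      _ = 2 * (R * M) / n := by ring
      _ ≤ 1 / 2 := hsmall
  exact ⟨V, hVbd, fun k h1 h2 => by rw [hdef k h1 h2]; exact hdefbd k h1 h2⟩

lemma iterate_lemma (m : ℕ) (A : ℤ → Euc m ≃L[ℝ] Euc m) (M : ℝ) (hM : 0 < M)
    (happrox : ∀ (i : ℤ) (N : ℕ), 1 ≤ N → ∀ w : ℤ → Euc m, (∀ k, ‖w k‖ ≤ 1) →
      ∃ V : ℤ → Euc m, (∀ k : ℤ, i ≤ k → k ≤ i + N → ‖V k‖ ≤ M) ∧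
        (∀ k : ℤ, i ≤ k → k ≤ i + N - 1 → ‖V (k + 1) - A k (V k) - w (k + 1)‖ ≤ 1 / 2)) :
    SG m A 0 := by
  refine ⟨2 * M, by positivity, ?_⟩
  intro i N hN w hw
  have hch : ∀ u : ℤ → Euc m, ∃ V : ℤ → Euc m, (∀ k, ‖u k‖ ≤ 1) →
      (∀ k : ℤ, i ≤ k → k ≤ i + N → ‖V k‖ ≤ M) ∧
      (∀ k : ℤ, i ≤ k → k ≤ i + N - 1 → ‖V (k + 1) - A k (V k) - u (k + 1)‖ ≤ 1 / 2) := by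
    intro u
    by_cases h : ∀ k, ‖u k‖ ≤ 1
    · obtain ⟨V, h1, h2⟩ := happrox i N hN u h
      exact ⟨V, fun _ => ⟨h1, h2⟩⟩
    · exact ⟨0, fun h' => absurd h' h⟩
  choose Vs hVs using hch
  set step : (ℤ → Euc m) → (ℤ → Euc m) := fun u k =>
    if i + 1 ≤ k ∧ k ≤ i + N then (2 : ℝ) • (A (k - 1) (Vs u (k - 1)) + u k - Vs u k) else 0
    with hstep
  set F : ℕ → (ℤ → Euc m) :=
    fun t => step^[t] (fun k => if i + 1 ≤ k ∧ k ≤ i + N then w k else 0) with hF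
  have hF0 : ∀ k, i + 1 ≤ k → k ≤ i + N → F 0 k = w k := by
    intro k h1 h2
    simp only [hF, Function.iterate_zero, id]
    rw [if_pos ⟨h1, h2⟩]
  have hFsucc : ∀ t, F (t + 1) = step (F t) := by
    intro t
    simp only [hF, Function.iterate_succ_apply']
  have hgood : ∀ t, ∀ k, ‖F t k‖ ≤ 1 := by
    intro t
    induction t with
    | zero =>
        intro k
        simp only [hF, Function.iterate_zero, id]
        by_cases h : i + 1 ≤ k ∧ k ≤ i + N
        · rw [if_pos h]; exact hw k h.1 h.2
        · rw [if_neg h]; simp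
    | succ t ih =>
        intro k
        rw [hFsucc t, hstep]
        simp only []
        by_cases h : i + 1 ≤ k ∧ k ≤ i + N
        · rw [if_pos h]
          have hd := (hVs (F t) ih).2 (k - 1) (by omega) (by omega)
          rw [show k - 1 + 1 = k by ring] at hd
          have heq : ‖A (k - 1) (Vs (F t) (k - 1)) + F t k - Vs (F t) k‖
              = ‖Vs (F t) k - A (k - 1) (Vs (F t) (k - 1)) - F t k‖ := by
            rw [← norm_neg]; congr 1; abel
          rw [norm_smul, heq]
          have h2 : ‖(2 : ℝ)‖ = 2 := by norm_num [Real.norm_eq_abs]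
          rw [h2]
          linarith
        · rw [if_neg h]; simp
  have hVbd : ∀ t, ∀ k : ℤ, i ≤ k → k ≤ i + N → ‖Vs (F t) k‖ ≤ M :=
    fun t k h1 h2 => (hVs (F t) (hgood t)).1 k h1 h2
  set g : ℕ → ℤ → Euc m := fun t k => ((1 : ℝ) / 2) ^ t • Vs (F t) k with hg
  have hgbd : ∀ t, ∀ k : ℤ, i ≤ k → k ≤ i + N → ‖g t k‖ ≤ M * ((1 : ℝ) / 2) ^ t := by
    intro t k h1 h2
    rw [hg]
    simp only []
    rw [norm_smul, norm_pow, Real.norm_eq_abs, abs_of_pos (by norm_num : (0:ℝ) < 1/2)]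
    rw [mul_comm]
    exact mul_le_mul_of_nonneg_right (hVbd t k h1 h2) (by positivity)
  have hgeo : Summable (fun t : ℕ => M * ((1 : ℝ) / 2) ^ t) :=
    (summable_geometric_of_lt_one (by norm_num) (by norm_num)).mul_left M
  have hsummable : ∀ k : ℤ, i ≤ k → k ≤ i + N → Summable (fun t => g t k) := by
    intro k h1 h2
    exact Summable.of_norm_bounded hgeo (fun t => hgbd t k h1 h2)
  set v : ℤ → Euc m := fun k => ∑' t, g t k with hvdef
  refine ⟨v, ?_, ?_⟩
  · -- recurrence
    intro k hk1 hk2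
    have hS1 := hsummable (k + 1) (by omega) (by omega)
    have hS0 := hsummable k hk1 (by omega)
    have hS0' : Summable (fun t => ((1 : ℝ) / 2) ^ t • A k (Vs (F t) k)) := by
      have := hS0.map ((A k : Euc m →L[ℝ] Euc m) : Euc m →ₗ[ℝ] Euc m).toAddMonoidHom
        (A k).continuous
      convert this using 2 with t
      simp [hg]
    have hmap : A k (v k) = ∑' t, ((1 : ℝ) / 2) ^ t • A k (Vs (F t) k) := by
      rw [hvdef]
      simp only []
      rw [show A k (∑' t, g t k) = (A k : Euc m →L[ℝ] Euc m) (∑' t, g t k) from rfl]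
      rw [ContinuousLinearMap.map_tsum _ hS0]
      apply tsum_congr
      intro t
      rw [hg]
      simp only []
      rw [map_smul]
      rfl
    have hsub : v (k + 1) - A k (v k)
        = ∑' t, (((1 : ℝ) / 2) ^ t • Vs (F t) (k + 1) - ((1 : ℝ) / 2) ^ t • A k (Vs (F t) k)) := by
      rw [hmap, hvdef]
      exact (Summable.tsum_sub hS1 hS0').symm
    set a : ℕ → Euc m := fun t => ((1 : ℝ) / 2) ^ t • F t (k + 1) with ha
    have hterm : ∀ t, ((1 : ℝ) / 2) ^ t • Vs (F t) (k + 1) - ((1 : ℝ) / 2) ^ t • A k (Vs (F t) k)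
        = a t - a (t + 1) := by
      intro t
      rw [ha]
      simp only []
      have hstep1 : F (t + 1) (k + 1)
          = (2 : ℝ) • (A k (Vs (F t) k) + F t (k + 1) - Vs (F t) (k + 1)) := by
        rw [hFsucc, hstep]
        simp only []
        rw [if_pos ⟨by omega, by omega⟩]
        rw [show k + 1 - 1 = k by ring]
      rw [hstep1]
      module
    have hsum2 : Summable (fun t => a t - a (t + 1)) := by
      have := hS1.sub hS0'
      apply this.congr
      intro t
      exact hterm t
    have htel : ∑' t, (a t - a (t + 1)) = a 0 := by
      have h1 : Filter.Tendsto (fun T => ∑ t ∈ Finset.range T, (a t - a (t + 1)))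
          Filter.atTop (nhds (a 0)) := by
        simp only [Finset.sum_range_sub']
        have hb : ∀ T : ℕ, ‖a T‖ ≤ ((1 : ℝ) / 2) ^ T := by
          intro T
          rw [ha]
          simp only []
          rw [norm_smul, norm_pow, Real.norm_eq_abs, abs_of_pos (by norm_num : (0:ℝ) < 1/2)]
          calc ((1:ℝ)/2) ^ T * ‖F T (k + 1)‖ ≤ ((1:ℝ)/2) ^ T * 1 :=
                mul_le_mul_of_nonneg_left (hgood T (k + 1)) (by positivity)
            _ = ((1:ℝ)/2) ^ T := mul_one _
        have h2 : Filter.Tendsto (fun T => a T) Filter.atTop (nhds 0) :=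
          squeeze_zero_norm hb
            (tendsto_pow_atTop_nhds_zero_of_lt_one (by norm_num) (by norm_num))
        simpa using tendsto_const_nhds.sub h2
      exact tendsto_nhds_unique (hsum2.hasSum.tendsto_sum_nat) h1
    have hkey : v (k + 1) - A k (v k) = w (k + 1) := by
      rw [hsub, tsum_congr hterm, htel, ha]
      simp only [pow_zero, one_smul]
      exact hF0 (k + 1) (by omega) (by omega)
    rw [← sub_eq_iff_eq_add']
    exact hkey
  · -- bound
    intro k h1 h2
    have hS0 := hsummable k h1 h2
    have hnorm : Summable (fun t => ‖g t k‖) :=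
      Summable.of_nonneg_of_le (fun t => norm_nonneg _) (fun t => hgbd t k h1 h2) hgeo
    calc ‖v k‖ ≤ ∑' t, ‖g t k‖ := norm_tsum_le_tsum_norm hnorm
      _ ≤ ∑' t, M * ((1 : ℝ) / 2) ^ t := Summable.tsum_le_tsum (fun t => hgbd t k h1 h2) hnorm hgeo
      _ = M * (1 - 1 / 2)⁻¹ := by
          rw [tsum_mul_left, tsum_geometric_of_lt_one (by norm_num) (by norm_num)]
      _ = 2 * M := by norm_num [mul_comm]
      _ = 2 * M * (N : ℝ) ^ (0 : ℝ) := by rw [Real.rpow_zero, mul_one]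

/-- Corollary of Theorems 3.4 and 3.5: for bounded sequences of isomorphisms,
the sublinear growth property SG(γ) (γ ∈ (0,1)) is equivalent to the bounded
solution property SG(0). -/
theorem sublinear_growth_iff_bounded_solution
    (m : ℕ) (hm : 1 ≤ m) (R : ℝ) (hR : 1 < R)
    (A : ℤ → Euc m ≃L[ℝ] Euc m)
    (hAbound : ∀ n : ℤ, ‖(A n : Euc m →L[ℝ] Euc m)‖ < R ∧
      ‖((A n).symm : Euc m →L[ℝ] Euc m)‖ < R) :
    ∀ γ : ℝ, γ ∈ Set.Ioo (0 : ℝ) 1 → (SG m A γ ↔ SG m A 0) := by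
  intro γ hγ
  constructor
  · rintro ⟨L, hL, hSG⟩
    have hR0 : (0 : ℝ) < R := lt_trans zero_lt_one hR
    have hRL : (0 : ℝ) < R * L := mul_pos hR0 hL
    -- choose the window half-length n
    obtain ⟨n, hn8, hn1⟩ : ∃ n : ℕ, 8 * R * L ≤ (n : ℝ) ^ (1 - γ) ∧ 1 ≤ n := by
      have h1γ : (0 : ℝ) < 1 - γ := by linarith [hγ.2]
      have ht := (tendsto_rpow_atTop h1γ).comp
        (tendsto_natCast_atTop_atTop (R := ℝ))
      exact ((ht.eventually_ge_atTop (8 * R * L)).and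
        (Filter.eventually_ge_atTop 1)).exists
    have hx : (0 : ℝ) < n := by exact_mod_cast hn1
    have hsmall : 2 * (R * (L * ((2 * n : ℕ) : ℝ) ^ γ)) / n ≤ 1 / 2 := by
      have h2n : ((2 * n : ℕ) : ℝ) = 2 * (n : ℝ) := by push_cast; ring
      have hpow : ((2 : ℝ) * n) ^ γ ≤ 2 * (n : ℝ) ^ γ := by
        rw [Real.mul_rpow (by norm_num) hx.le]
        refine mul_le_mul_of_nonneg_right ?_ (Real.rpow_nonneg hx.le γ)
        calc (2 : ℝ) ^ γ ≤ (2 : ℝ) ^ (1 : ℝ) :=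
              Real.rpow_le_rpow_of_exponent_le one_le_two hγ.2.le
          _ = 2 := Real.rpow_one 2
      have hmul : (n : ℝ) ^ (1 - γ) * (n : ℝ) ^ γ = n := by
        rw [← Real.rpow_add hx, show (1 - γ) + γ = 1 by ring, Real.rpow_one]
      have h8 : 8 * R * L * (n : ℝ) ^ γ ≤ n := by
        calc 8 * R * L * (n : ℝ) ^ γ ≤ (n : ℝ) ^ (1 - γ) * (n : ℝ) ^ γ :=
              mul_le_mul_of_nonneg_right hn8 (Real.rpow_nonneg hx.le γ)
          _ = n := hmul
      rw [h2n, div_le_iff₀ hx]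
      have h3 : R * L * (((2 : ℝ) * n) ^ γ) ≤ R * L * (2 * (n : ℝ) ^ γ) :=
        mul_le_mul_of_nonneg_left hpow hRL.le
      nlinarith [h3, h8]
    have hM : (0 : ℝ) < L * ((2 * n : ℕ) : ℝ) ^ γ := by
      apply mul_pos hL
      apply Real.rpow_pos_of_pos
      have : (0 : ℕ) < 2 * n := by omega
      exact_mod_cast this
    exact iterate_lemma m A (L * ((2 * n : ℕ) : ℝ) ^ γ) hM
      (fun i N _ w hw => approx_lemma m A R hR (fun nn => (hAbound nn).1)
        L γ hL hSG n hn1 hsmall i N w hw)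
  · rintro ⟨L, hL, h⟩
    refine ⟨L, hL, ?_⟩
    intro i N hN w hw
    obtain ⟨v, h1, h2⟩ := h i N hN w hw
    refine ⟨v, h1, fun k hk1 hk2 => ?_⟩
    have hb := h2 k hk1 hk2
    rw [Real.rpow_zero, mul_one] at hb
    have hNγ : (1 : ℝ) ≤ (N : ℝ) ^ γ := by
      rw [show (1 : ℝ) = (N : ℝ) ^ (0 : ℝ) from (Real.rpow_zero _).symm]
      exact Real.rpow_le_rpow_of_exponent_le (by exact_mod_cast hN) hγ.1.le
    nlinarith [hb, hNγ, hL]
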